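/- Let L be a finite set, c : (L →₀ ℕ) → ℝ≥0 with ∑_μ c_μ ≤ 1, and define f(r) = ∑_μ c_μ · r^μ ∈ [0,∞] for r : L → ℝ≥0. Fix l ∈ L, and for x ∈ ℝ≥0 let 1[l↦x] : L → ℝ≥0 denote the function with value x at l and value 1 at every other element of L. Then, as x → 1 from the left (x ∈ [0,1)), the quotient (f(1) − f(1[l↦x])) / (1 − x) tends in [0,∞] to ∑_μ μ(l) · c_μ (which may be +∞), where 1 denotes the constantly-one function on L. -/

import Mathlib

open scoped NNReal ENNReal

/-- The power series with nonnegative coefficients `c` indexed by finitely supported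
multi-indices, evaluated at `r : L → ℝ≥0`, in `[0,∞]`. -/
noncomputable def powerSeries {L : Type*} (c : (L →₀ ℕ) → ℝ≥0) (r : L → ℝ≥0) : ℝ≥0∞ :=
  ∑' μ : L →₀ ℕ, (c μ : ℝ≥0∞) * μ.prod (fun a n => (r a : ℝ≥0∞) ^ n)

private theorem geom_aux19 (x : ℝ≥0∞) (hx : x ≤ 1) (n : ℕ) :
    1 - x ^ n = (1 - x) * ∑ k ∈ Finset.range n, x ^ k := by
  induction n with
  | zero => simp
  | succ n ih =>
    have hxt : x ≠ ∞ := (hx.trans_lt ENNReal.one_lt_top).ne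
    have hle : x ^ (n + 1) ≤ x ^ n := by
      calc x ^ (n+1) ≤ x ^ n * 1 := by rw [pow_succ]; exact mul_le_mul_right hx _
      _ = x ^ n := mul_one _
    rw [geom_sum_succ', mul_add, ← ih,
      ENNReal.sub_mul (fun _ _ => ENNReal.pow_ne_top hxt), one_mul, ← pow_succ',
      add_comm (x ^ n - x ^ (n+1))]
    exact (tsub_add_tsub_cancel (pow_le_one' hx n) hle).symm

private theorem tsum_sub_aux19 {ι : Type*} (f g : ι → ℝ≥0∞) (hle : ∀ i, g i ≤ f i)
    (hg : ∑' i, g i ≠ ∞) : ∑' i, f i - ∑' i, g i = ∑' i, (f i - g i) := by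
  have h : ∀ i, f i = (f i - g i) + g i := fun i => (tsub_add_cancel_of_le (hle i)).symm
  conv_lhs => rw [tsum_congr h, ENNReal.tsum_add]
  exact ENNReal.add_sub_cancel_right hg

private theorem sup_pow_aux19 (k : ℕ) :
    ⨆ x : (Set.Iio (1:ℝ≥0)), ((x : ℝ≥0) : ℝ≥0∞) ^ k = 1 := by
  apply le_antisymm
  · exact iSup_le fun x => pow_le_one' (by exact_mod_cast le_of_lt x.2) k
  · have hne : Filter.NeBot (nhdsWithin (1 : ℝ≥0) (Set.Iio 1)) :=
      nhdsWithin_Iio_self_neBot' ⟨0, by norm_num⟩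
    have ht : Filter.Tendsto (fun x : ℝ≥0 => ((x : ℝ≥0∞)) ^ k)
        (nhdsWithin (1 : ℝ≥0) (Set.Iio 1)) (nhds 1) := by
      have : Filter.Tendsto (fun x : ℝ≥0 => ((x : ℝ≥0∞)) ^ k) (nhds 1) (nhds 1) := by
        have := ((ENNReal.continuous_pow k).tendsto ((1:ℝ≥0):ℝ≥0∞)).comp
          (ENNReal.continuous_coe.tendsto (1 : ℝ≥0))
        simpa [Function.comp_def] using this
      exact this.mono_left nhdsWithin_le_nhds
    refine le_of_tendsto ht ?_
    filter_upwards [self_mem_nhdsWithin] with x hx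
    exact le_iSup (fun y : (Set.Iio (1:ℝ≥0)) => (((y : ℝ≥0)) : ℝ≥0∞) ^ k) ⟨x, hx⟩

/-- For a finite set `L` and coefficients summing to at most `1`, the partial
difference quotient at the all-ones point in the direction `l` tends, as `x → 1⁻`,
to the partial derivative `∑_μ μ(l)·c_μ` (possibly `+∞`). Here `1[l↦x]` is the
function with value `x` at `l` and `1` elsewhere. -/
theorem stmt19 {L : Type*} [Fintype L] [DecidableEq L] (c : (L →₀ ℕ) → ℝ≥0)
    (hc : ∑' μ : L →₀ ℕ, (c μ : ℝ≥0∞) ≤ 1) (l : L) :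
    Filter.Tendsto
      (fun x : ℝ≥0 =>
        (powerSeries c 1 - powerSeries c (Function.update (1 : L → ℝ≥0) l x)) /
          (1 - (x : ℝ≥0∞)))
      (nhdsWithin 1 (Set.Iio 1))
      (nhds (∑' μ : L →₀ ℕ, (μ l : ℝ≥0∞) * (c μ : ℝ≥0∞))) := by
  classical
  -- the auxiliary monotone function
  set F : ℝ≥0 → ℝ≥0∞ := fun x =>
    ∑' μ : L →₀ ℕ, (c μ : ℝ≥0∞) * ∑ k ∈ Finset.range (μ l), ((x : ℝ≥0∞)) ^ k with hF
  -- powerSeries at 1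
  have hps1 : powerSeries c 1 = ∑' μ : L →₀ ℕ, (c μ : ℝ≥0∞) := by
    unfold powerSeries
    refine tsum_congr fun μ => ?_
    simp [Finsupp.prod]
  -- powerSeries at the updated point
  have hpsx : ∀ x : ℝ≥0, powerSeries c (Function.update (1 : L → ℝ≥0) l x)
      = ∑' μ : L →₀ ℕ, (c μ : ℝ≥0∞) * ((x : ℝ≥0∞)) ^ (μ l) := by
    intro x
    unfold powerSeries
    refine tsum_congr fun μ => ?_
    congr 1
    rw [Finsupp.prod, Finset.prod_eq_single l]
    · simp
    · intro b _ hb; simp [Function.update_of_ne hb]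
    · intro h; simp [Finsupp.notMem_support_iff.mp h]
  -- the quotient equals F on Iio 1
  have hEq : ∀ x ∈ Set.Iio (1 : ℝ≥0),
      (powerSeries c 1 - powerSeries c (Function.update (1 : L → ℝ≥0) l x)) /
        (1 - (x : ℝ≥0∞)) = F x := by
    intro x hx
    have hx1 : (x : ℝ≥0∞) ≤ 1 := by exact_mod_cast hx.le
    have hxlt : (x : ℝ≥0∞) < 1 := by exact_mod_cast hx
    have hle : ∀ μ : L →₀ ℕ, (c μ : ℝ≥0∞) * ((x : ℝ≥0∞)) ^ (μ l) ≤ (c μ : ℝ≥0∞) := by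
      intro μ
      calc (c μ : ℝ≥0∞) * ((x : ℝ≥0∞)) ^ (μ l) ≤ (c μ : ℝ≥0∞) * 1 :=
        mul_le_mul_right (pow_le_one' hx1 _) _
      _ = _ := mul_one _
    have hgfin : ∑' μ : L →₀ ℕ, (c μ : ℝ≥0∞) * ((x : ℝ≥0∞)) ^ (μ l) ≠ ∞ :=
      ((ENNReal.tsum_le_tsum hle).trans hc).trans_lt ENNReal.one_lt_top |>.ne
    have h0 : (1 - (x:ℝ≥0∞)) ≠ 0 := (tsub_pos_of_lt hxlt).ne'
    have htop : (1 - (x:ℝ≥0∞)) ≠ ∞ := (tsub_le_self.trans_lt ENNReal.one_lt_top).ne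
    rw [hps1, hpsx, tsum_sub_aux19 _ _ hle hgfin, div_eq_mul_inv,
      ← ENNReal.tsum_mul_right, hF]
    refine tsum_congr fun μ => ?_
    have h1 : (c μ : ℝ≥0∞) - (c μ : ℝ≥0∞) * (x:ℝ≥0∞) ^ (μ l)
        = (c μ : ℝ≥0∞) * (1 - (x:ℝ≥0∞) ^ (μ l)) := by
      rw [ENNReal.mul_sub (fun _ _ => ENNReal.coe_ne_top), mul_one]
    calc ((c μ : ℝ≥0∞) - (c μ : ℝ≥0∞) * (x:ℝ≥0∞) ^ (μ l)) * (1 - (x:ℝ≥0∞))⁻¹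
        = (c μ : ℝ≥0∞) * (∑ k ∈ Finset.range (μ l), ((x:ℝ≥0∞)) ^ k)
            * ((1 - (x:ℝ≥0∞)) * (1 - (x:ℝ≥0∞))⁻¹) := by
          rw [h1, geom_aux19 _ hx1]; ring
      _ = (c μ : ℝ≥0∞) * ∑ k ∈ Finset.range (μ l), ((x:ℝ≥0∞)) ^ k := by
          rw [ENNReal.mul_inv_cancel h0 htop, mul_one]
  -- F is monotone
  have hmono : Monotone F := by
    intro a b hab
    refine ENNReal.tsum_le_tsum fun μ => mul_le_mul_right ?_ _
    exact Finset.sum_le_sum fun k _ => pow_le_pow_left' (by exact_mod_cast hab) k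
  -- the limit of F from the left at 1
  have hlim := hmono.tendsto_nhdsLT 1
  -- identify the sSup
  have hsup : sSup (F '' Set.Iio 1) = ∑' μ : L →₀ ℕ, (μ l : ℝ≥0∞) * (c μ : ℝ≥0∞) := by
    rw [sSup_image']
    have hswap : ⨆ x : (Set.Iio (1:ℝ≥0)), F x
        = ∑' μ : L →₀ ℕ, ⨆ x : (Set.Iio (1:ℝ≥0)),
            (c μ : ℝ≥0∞) * ∑ k ∈ Finset.range (μ l), (((x : ℝ≥0) : ℝ≥0∞)) ^ k := by
      have : Nonempty (Set.Iio (1:ℝ≥0)) := ⟨⟨0, by norm_num⟩⟩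
      rw [eq_comm]
      simp only [hF, ENNReal.tsum_eq_iSup_sum]
      rw [iSup_comm]
      refine iSup_congr fun s => ?_
      exact ENNReal.finsetSum_iSup_of_monotone (s := s)
        (f := fun μ (x : Set.Iio (1:ℝ≥0)) =>
          (c μ : ℝ≥0∞) * ∑ k ∈ Finset.range (μ l), (((x : ℝ≥0) : ℝ≥0∞)) ^ k)
        (fun μ a b hab => mul_le_mul_right (Finset.sum_le_sum fun k _ =>
          pow_le_pow_left' (ENNReal.coe_le_coe.mpr hab) k) _)
    rw [hswap]
    refine tsum_congr fun μ => ?_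
    have : Nonempty (Set.Iio (1:ℝ≥0)) := ⟨⟨0, by norm_num⟩⟩
    rw [← ENNReal.mul_iSup]
    have hsum : ⨆ x : (Set.Iio (1:ℝ≥0)), ∑ k ∈ Finset.range (μ l), (((x : ℝ≥0) : ℝ≥0∞)) ^ k
        = (μ l : ℝ≥0∞) := by
      rw [← ENNReal.finsetSum_iSup_of_monotone (s := Finset.range (μ l))
        (f := fun k (x : Set.Iio (1:ℝ≥0)) => (((x : ℝ≥0) : ℝ≥0∞)) ^ k)
        (fun k a b hab => pow_le_pow_left' (ENNReal.coe_le_coe.mpr hab) k)]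
      simp [sup_pow_aux19]
    rw [hsum, mul_comm]
  rw [← hsup]
  exact hlim.congr' (Filter.eventuallyEq_of_mem self_mem_nhdsWithin fun x hx => (hEq x hx).symm)
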